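/- arXiv:1401.0554 — 8 statements merged into one kernel-verified Lean document; each statement's English description precedes it below -/
import Mathlib

section
/- Let R be a unique factorization domain with field of fractions F, let π ∈ R be a prime element, and let ξ be a unit of R. If there exist elements a, b ∈ F with a² − ξ·b² = π, then the image of ξ in the field of fractions of R/(π) is a square. -/
private lemma descent {R : Type*} [CommRing R] [IsDomain R] (π ξ : R) (hπ : Prime π) :
    ∀ n : ℕ, ∀ x y z : R, ¬ π ^ n ∣ z → x ^ 2 - ξ * y ^ 2 = π * z ^ 2 →
      ∃ x y z : R, x ^ 2 - ξ * y ^ 2 = π * z ^ 2 ∧ ¬ π ∣ y := by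
  intro n
  induction n with
  | zero => intro x y z hz _; exact absurd (by simpa using dvd_refl (1 : R)) (by simpa using hz)
  | succ n ih =>
    intro x y z hz E
    by_cases hy : π ∣ y
    · obtain ⟨y', rfl⟩ := hy
      have hx : π ∣ x := by
        have : π ∣ x ^ 2 := ⟨z ^ 2 + ξ * π * y' ^ 2, by linear_combination E⟩
        exact hπ.dvd_of_dvd_pow this
      obtain ⟨x', rfl⟩ := hx
      have hz2 : π ∣ z := by
        have : π ∣ z ^ 2 := by
          have h1 : π * z ^ 2 = π * (π * (x' ^ 2 - ξ * y' ^ 2)) := by linear_combination -E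
          have := mul_left_cancel₀ hπ.ne_zero h1
          exact this ▸ Dvd.intro _ rfl
        exact hπ.dvd_of_dvd_pow this
      obtain ⟨z', rfl⟩ := hz2
      have E' : x' ^ 2 - ξ * y' ^ 2 = π * z' ^ 2 := by
        have h1 : π * π * (x' ^ 2 - ξ * y' ^ 2) = π * π * (π * z' ^ 2) := by
          linear_combination E
        exact mul_left_cancel₀ (mul_ne_zero hπ.ne_zero hπ.ne_zero) h1
      have hz' : ¬ π ^ n ∣ z' := fun ⟨c, hc⟩ => hz ⟨c, by rw [pow_succ, hc]; ring⟩
      exact ih x' y' z' hz' E'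
    · exact ⟨x, y, z, E, hy⟩

/-- Let `R` be a unique factorization domain with field of fractions `F`, let `π ∈ R` be a
prime element, and let `ξ` be a unit of `R`. If there exist elements `a, b ∈ F` with
`a² − ξ·b² = π`, then the image of `ξ` in the field of fractions of `R/(π)` is a square. -/
theorem square_mod_pi_of_norm_repr
    (R : Type*) [CommRing R] [IsDomain R] [UniqueFactorizationMonoid R]
    (F : Type*) [Field F] [Algebra R F] [IsFractionRing R F]
    (π : R) (hπ : Prime π) (ξ : R) (hξ : IsUnit ξ)
    (h : ∃ a b : F, a ^ 2 - algebraMap R F ξ * b ^ 2 = algebraMap R F π) :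
    IsSquare (algebraMap (R ⧸ Ideal.span {π}) (FractionRing (R ⧸ Ideal.span {π}))
      (Ideal.Quotient.mk (Ideal.span {π}) ξ)) := by
  obtain ⟨a, b, hab⟩ := h
  obtain ⟨xa, za, hza, rfl⟩ := IsFractionRing.div_surjective (A := R) a
  obtain ⟨xb, zb, hzb, rfl⟩ := IsFractionRing.div_surjective (A := R) b
  set f := algebraMap R F
  have hza0 : za ≠ 0 := nonZeroDivisors.ne_zero hza
  have hzb0 : zb ≠ 0 := nonZeroDivisors.ne_zero hzb
  have hinj : Function.Injective f := IsFractionRing.injective R F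
  have hfza : f za ≠ 0 := fun h0 => hza0 (hinj (by simpa using h0))
  have hfzb : f zb ≠ 0 := fun h0 => hzb0 (hinj (by simpa using h0))
  have E : (xa * zb) ^ 2 - ξ * (xb * za) ^ 2 = π * (za * zb) ^ 2 := by
    apply hinj
    simp only [map_sub, map_mul, map_pow]
    field_simp at hab
    linear_combination hab
  have hz0 : za * zb ≠ 0 := mul_ne_zero hza0 hzb0
  obtain ⟨m, hm⟩ := FiniteMultiplicity.of_prime_left hπ hz0
  obtain ⟨x, y, z, E2, hy⟩ := descent π ξ hπ (m + 1) _ _ _ hm E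
  set Q := Ideal.Quotient.mk (Ideal.span {π})
  have hQπ : Q π = 0 := by
    rw [Ideal.Quotient.eq_zero_iff_mem]; exact Ideal.mem_span_singleton_self π
  have hQy : Q y ≠ 0 := by
    rw [Ne, Ideal.Quotient.eq_zero_iff_mem, Ideal.mem_span_singleton]
    exact hy
  have hE3 : Q x ^ 2 = Q ξ * Q y ^ 2 := by
    have := congrArg Q E2
    simp only [map_sub, map_mul, map_pow, hQπ, zero_mul] at this
    linear_combination this
  set S := R ⧸ Ideal.span {π}
  haveI : (Ideal.span {π}).IsPrime := (Ideal.span_singleton_prime hπ.ne_zero).mpr hπ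
  set K := FractionRing S
  set g := algebraMap S K
  have hgy : g (Q y) ≠ 0 := fun h0 => hQy (IsFractionRing.injective S K (by rw [map_zero]; exact h0))
  refine ⟨g (Q x) / g (Q y), ?_⟩
  have hE4 := congrArg g hE3
  simp only [map_mul, map_pow] at hE4
  rw [div_mul_div_comm, eq_div_iff (mul_ne_zero hgy hgy)]
  linear_combination -hE4
end

section
/- Let R be a commutative ring and L an R-module such that the canonical ring homomorphism R → End_R(L), sending r to scalar multiplication by r, is bijective. Let φ, ψ : L → L^∨ be two symmetric R-module isomorphisms. Then φ and ψ are isometric (i.e., there exists an R-module automorphism m of L with φ = m^∨ ∘ ψ ∘ m) if and only if there exists a unit ℓ ∈ Rˣ with φ = ℓ² • ψ. -/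
/-- Let `R` be a commutative ring and `L` an `R`-module such that the canonical ring
homomorphism `R → End_R(L)` is bijective.  Two symmetric isomorphisms `φ, ψ : L ≃ L^∨`
are isometric (there is an automorphism `m` of `L` with `φ = m^∨ ∘ ψ ∘ m`) if and only
if `φ = ℓ² • ψ` for some unit `ℓ ∈ Rˣ`. -/
theorem isometric_iff_differ_by_unit_square
    (R : Type*) [CommRing R] (L : Type*) [AddCommGroup L] [Module R L]
    (hEnd : Function.Bijective (Module.toModuleEnd R (S := R) L))
    (φ ψ : L ≃ₗ[R] Module.Dual R L)
    (hφ : ∀ x y : L, φ x y = φ y x) (hψ : ∀ x y : L, ψ x y = ψ y x) :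
    (∃ m : L ≃ₗ[R] L, ∀ x y : L, φ x y = ψ (m x) (m y)) ↔
      (∃ ℓ : Rˣ, ∀ x y : L, φ x y = (ℓ : R) ^ 2 * ψ x y) := by
  constructor
  · rintro ⟨m, hm⟩
    obtain ⟨r, hr⟩ := hEnd.2 (m : L →ₗ[R] L)
    obtain ⟨s, hs⟩ := hEnd.2 (m.symm : L →ₗ[R] L)
    have hrx : ∀ x : L, m x = r • x := by
      intro x
      have := congrArg (fun f : Module.End R L => f x) hr
      simpa using this.symm
    have hsx : ∀ x : L, m.symm x = s • x := by
      intro x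
      have := congrArg (fun f : Module.End R L => f x) hs
      simpa using this.symm
    have hrs : r * s = 1 := by
      apply hEnd.1
      ext x
      simp [Module.toModuleEnd_apply, mul_smul, ← hsx, ← hrx]
    have hsr : s * r = 1 := by rw [mul_comm]; exact hrs
    refine ⟨⟨r, s, hrs, hsr⟩, fun x y => ?_⟩
    have := hm x y
    rw [hrx, hrx] at this
    simpa [smul_eq_mul, sq, mul_assoc] using this
  · rintro ⟨ℓ, hℓ⟩
    refine ⟨{ toFun := fun x => (ℓ : R) • x
              invFun := fun x => ((ℓ⁻¹ : Rˣ) : R) • x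
              map_add' := fun x y => smul_add _ x y
              map_smul' := fun r x => smul_comm _ r x
              left_inv := fun x => by simp [← mul_smul]
              right_inv := fun x => by simp [← mul_smul] }, fun x y => ?_⟩
    simp only [LinearEquiv.coe_mk, hℓ x y]
    simp [smul_eq_mul, sq, mul_assoc]
end

section
/- Let R be a commutative ring and L an R-module such that the canonical ring homomorphism R → End_R(L), sending r to scalar multiplication by r, is bijective, and assume there exists at least one symmetric R-module isomorphism φ₀ : L → L^∨. Then the assignment u ↦ u • φ₀ induces a bijection between the group Rˣ/(Rˣ)² of square classes of units of R and the set of isometry classes of symmetric R-module isomorphisms L → L^∨. -/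
/-- A symmetric `R`-module isomorphism `L ≃ L^∨` (a nondegenerate symmetric bilinear
form on `L`). -/
def SymIso (R L : Type*) [CommRing R] [AddCommGroup L] [Module R L] : Type _ :=
  {φ : L ≃ₗ[R] Module.Dual R L // ∀ x y : L, φ.1 x y = φ.1 y x}

/-- Two symmetric isomorphisms `φ, ψ : L ≃ L^∨` are isometric when there is an
`R`-module automorphism `m` of `L` with `φ = m^∨ ∘ ψ ∘ m`. -/
def SymIso.Isometric {R L : Type*} [CommRing R] [AddCommGroup L] [Module R L]
    (φ ψ : SymIso R L) : Prop :=
  ∃ m : L ≃ₗ[R] L, ∀ x y : L, φ.1.1 x y = ψ.1.1 (m x) (m y)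

/-- Multiplication of a symmetric isomorphism `L ≃ L^∨` by a unit `u ∈ Rˣ`. -/
def SymIso.unitSMul {R L : Type*} [CommRing R] [AddCommGroup L] [Module R L]
    (u : Rˣ) (φ : SymIso R L) : SymIso R L :=
  ⟨φ.1.trans (LinearEquiv.smulOfUnit u), fun x y => by
    show (u • φ.1.1 x) y = (u • φ.1.1 y) x
    simp only [LinearMap.smul_apply]
    rw [φ.2 x y]⟩

/-- The subgroup of squares of the unit group `Rˣ`. -/
def squareUnits (R : Type*) [CommRing R] : Subgroup Rˣ :=
  (powMonoidHom 2 : Rˣ →* Rˣ).range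

section Aux

variable {R L : Type*} [CommRing R] [AddCommGroup L] [Module R L]

lemma symIso_unitSMul_apply (u : Rˣ) (φ : SymIso R L) (x y : L) :
    (SymIso.unitSMul u φ).1.1 x y = (u : R) * φ.1.1 x y := rfl

lemma symIso_isometric_equivalence :
    Equivalence (SymIso.Isometric (R := R) (L := L)) := by
  constructor
  · intro φ; exact ⟨LinearEquiv.refl R L, fun x y => rfl⟩
  · rintro φ ψ ⟨m, hm⟩
    refine ⟨m.symm, fun x y => ?_⟩
    have h := hm (m.symm x) (m.symm y)
    simp only [LinearEquiv.apply_symm_apply] at h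
    exact h.symm
  · rintro φ ψ χ ⟨m, hm⟩ ⟨n, hn⟩
    exact ⟨m.trans n, fun x y => by rw [hm, hn]; rfl⟩

/-- Every automorphism of `L` is multiplication by a unit. -/
lemma exists_unit_of_equiv (hEnd : Function.Bijective (Module.toModuleEnd R (S := R) L))
    (m : L ≃ₗ[R] L) : ∃ t : Rˣ, ∀ x : L, m x = (t : R) • x := by
  obtain ⟨r, hr⟩ := hEnd.2 m.toLinearMap
  obtain ⟨s, hs⟩ := hEnd.2 m.symm.toLinearMap
  have hrx : ∀ x : L, m x = r • x := fun x => by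
    rw [← LinearEquiv.coe_coe, ← hr]; rfl
  have hsx : ∀ x : L, m.symm x = s • x := fun x => by
    rw [← LinearEquiv.coe_coe, ← hs]; rfl
  have hrs : r * s = 1 := by
    apply hEnd.1
    ext x
    show (r * s) • x = (1 : R) • x
    rw [one_smul, mul_smul, ← hsx, ← hrx, m.apply_symm_apply]
  exact ⟨⟨r, s, hrs, by rw [mul_comm]; exact hrs⟩, hrx⟩

/-- Scalars acting equally on `φ x y` for all `x y` are equal. -/
lemma scalar_eq_of_forms_eq (hEnd : Function.Bijective (Module.toModuleEnd R (S := R) L))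
    (φ : SymIso R L) {a b : R} (h : ∀ x y : L, a * φ.1.1 x y = b * φ.1.1 x y) : a = b := by
  apply hEnd.1
  ext x
  show a • x = b • x
  have h1 : φ.1 (a • x) = φ.1 (b • x) := by
    ext y
    simpa [LinearEquiv.map_smul, smul_eq_mul] using h x y
  exact φ.1.injective h1

end Aux

/-- If `L` satisfies `End_R(L) ≅ R` and carries at least one symmetric isomorphism
`φ₀ : L ≃ L^∨`, then `u ↦ u • φ₀` induces a bijection between the square classes of
units `Rˣ/(Rˣ)²` and the isometry classes of symmetric isomorphisms `L ≃ L^∨`. -/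
theorem symIso_classes_equiv_square_classes
    (R : Type*) [CommRing R] (L : Type*) [AddCommGroup L] [Module R L]
    (hEnd : Function.Bijective (Module.toModuleEnd R (S := R) L))
    (φ₀ : SymIso R L) :
    ∃ e : (Rˣ ⧸ squareUnits R) ≃ Quot (SymIso.Isometric (R := R) (L := L)),
      ∀ u : Rˣ, e (QuotientGroup.mk u) = Quot.mk _ (SymIso.unitSMul u φ₀) := by
  have key : ∀ u v : Rˣ, SymIso.Isometric (SymIso.unitSMul u φ₀) (SymIso.unitSMul v φ₀)
      ↔ u⁻¹ * v ∈ squareUnits R := by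
    intro u v
    constructor
    · rintro ⟨m, hm⟩
      obtain ⟨t, ht⟩ := exists_unit_of_equiv hEnd m
      have h2 : ∀ x y : L, (u : R) * φ₀.1.1 x y = ((v : R) * t * t) * φ₀.1.1 x y := by
        intro x y
        have := hm x y
        rw [symIso_unitSMul_apply, symIso_unitSMul_apply, ht x, ht y] at this
        simp only [map_smul, LinearMap.smul_apply, smul_eq_mul] at this
        rw [this]; ring
      have h3 : (u : R) = (v : R) * t * t := scalar_eq_of_forms_eq hEnd φ₀ h2
      refine ⟨t⁻¹, ?_⟩
      have huv : u = v * t ^ 2 := by ext; push_cast; rw [h3]; ring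
      rw [powMonoidHom_apply, huv]
      group
    · rintro ⟨t, ht⟩
      rw [powMonoidHom_apply] at ht
      have hv : v = u * t ^ 2 := by rw [ht]; group
      refine ⟨LinearEquiv.smulOfUnit (R := R) (M := L) t⁻¹, fun x y => ?_⟩
      rw [symIso_unitSMul_apply, symIso_unitSMul_apply]
      show (u : R) * φ₀.1.1 x y = (v : R) * φ₀.1.1 ((t⁻¹ : Rˣ) • x) ((t⁻¹ : Rˣ) • y)
      simp only [Units.smul_def, map_smul, LinearMap.smul_apply, smul_eq_mul]
      have : (v : R) * ((t⁻¹ : Rˣ) : R) * ((t⁻¹ : Rˣ) : R) = (u : R) := by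
        rw [hv]; push_cast; linear_combination ((u : R) * (t : R) * ((t⁻¹ : Rˣ) : R) + (u : R)) * Units.mul_inv t
      rw [← this]; ring
  let f : Rˣ → Quot (SymIso.Isometric (R := R) (L := L)) :=
    fun u => Quot.mk _ (SymIso.unitSMul u φ₀)
  have hwd : ∀ a b : Rˣ, (QuotientGroup.leftRel (squareUnits R)) a b → f a = f b := by
    intro a b hab
    exact Quot.sound ((key a b).2 (QuotientGroup.leftRel_apply.1 hab))
  let F : (Rˣ ⧸ squareUnits R) → Quot (SymIso.Isometric (R := R) (L := L)) :=
    Quotient.lift f hwd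
  have hinj : Function.Injective F := by
    intro q1 q2
    induction q1 using Quotient.inductionOn with | h u =>
    induction q2 using Quotient.inductionOn with | h v =>
    intro h
    have h' : SymIso.Isometric (SymIso.unitSMul u φ₀) (SymIso.unitSMul v φ₀) :=
      (symIso_isometric_equivalence.eqvGen_iff).1 (Quot.eqvGen_exact h)
    exact QuotientGroup.eq.2 ((key u v).1 h')
  have hsurj : Function.Surjective F := by
    intro q
    induction q using Quot.inductionOn with | h ψ =>
    -- ψ = u • φ₀ for some unit u
    obtain ⟨t, ht⟩ := exists_unit_of_equiv hEnd (ψ.1.trans φ₀.1.symm)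
    refine ⟨QuotientGroup.mk t, ?_⟩
    show Quot.mk _ (SymIso.unitSMul t φ₀) = Quot.mk _ ψ
    apply congrArg
    apply Subtype.ext
    apply LinearEquiv.toLinearMap_injective
    apply LinearMap.ext
    intro x
    have hx : φ₀.1.symm (ψ.1 x) = (t : R) • x := ht x
    have : ψ.1 x = φ₀.1 ((t : R) • x) := by rw [← hx, φ₀.1.apply_symm_apply]
    show (SymIso.unitSMul t φ₀).1 x = ψ.1 x
    rw [this, LinearEquiv.map_smul]
    rfl
  refine ⟨Equiv.ofBijective F ⟨hinj, hsurj⟩, fun u => rfl⟩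
end

section
/- Let R be a unique factorization domain with field of fractions F, let π ∈ R be a prime element, and let ξ be a unit of R whose image in the field of fractions of R/(π) is not a square. Then the quaternion norm form ⟨1, −ξ, −π, πξ⟩ is anisotropic over F: for all x, y, z, w ∈ F, if x² − ξ·y² − π·z² + π·ξ·w² = 0 then x = y = z = w = 0. -/
/-- Let `R` be a unique factorization domain with field of fractions `F`, let `π ∈ R` be a
prime element, and let `ξ` be a unit of `R` whose image in the field of fractions of
`R/(π)` is not a square.  Then the quaternion norm form `⟨1, −ξ, −π, πξ⟩` is anisotropic
over `F`. -/
theorem quaternion_norm_form_anisotropic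
    (R : Type*) [CommRing R] [IsDomain R] [UniqueFactorizationMonoid R]
    (F : Type*) [Field F] [Algebra R F] [IsFractionRing R F]
    (π : R) (hπ : Prime π) (ξ : R) (hξ : IsUnit ξ)
    (hns : ¬ IsSquare (algebraMap (R ⧸ Ideal.span {π}) (FractionRing (R ⧸ Ideal.span {π}))
      (Ideal.Quotient.mk (Ideal.span {π}) ξ))) :
    ∀ x y z w : F,
      x ^ 2 - algebraMap R F ξ * y ^ 2 - algebraMap R F π * z ^ 2
          + algebraMap R F π * algebraMap R F ξ * w ^ 2 = 0 →
        x = 0 ∧ y = 0 ∧ z = 0 ∧ w = 0 := by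
  haveI hIp : (Ideal.span ({π} : Set R)).IsPrime :=
    (Ideal.span_singleton_prime hπ.ne_zero).mpr hπ
  -- the quotient ring and its fraction field
  set k := R ⧸ Ideal.span ({π} : Set R) with hk
  haveI : IsDomain k := Ideal.Quotient.isDomain _
  set mk : R →+* k := Ideal.Quotient.mk (Ideal.span ({π} : Set R)) with hmk
  have hdvd_iff : ∀ a : R, π ∣ a ↔ mk a = 0 := by
    intro a
    rw [hmk, Ideal.Quotient.eq_zero_iff_mem, Ideal.mem_span_singleton]
  -- key modular lemma
  have hmod : ∀ a b : R, π ∣ (a ^ 2 - ξ * b ^ 2) → π ∣ a ∧ π ∣ b := by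
    intro a b hdvd
    have h0 : mk a ^ 2 = mk ξ * mk b ^ 2 := by
      have := (hdvd_iff _).mp hdvd
      rw [map_sub, map_mul, map_pow, map_pow, sub_eq_zero] at this
      exact this
    have hb : mk b = 0 := by
      by_contra hb
      apply hns
      set K := FractionRing k
      set f : k →+* K := algebraMap k K with hf
      have hinj : Function.Injective f := IsFractionRing.injective k K
      have hfb : f (mk b) ≠ 0 := fun h => hb (hinj (by simpa using h))
      have h2 : (f (mk a) / f (mk b)) ^ 2 = f (mk ξ) := by
        rw [div_pow, ← map_pow, h0, map_mul, map_pow]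
        exact mul_div_cancel_right₀ _ (pow_ne_zero 2 hfb)
      exact ⟨f (mk a) / f (mk b), by rw [← h2, pow_two]⟩
    have ha : mk a = 0 := by
      have : mk a ^ 2 = 0 := by rw [h0, hb]; ring
      exact pow_eq_zero_iff (n := 2) (by norm_num) |>.mp this
    exact ⟨(hdvd_iff a).mpr ha, (hdvd_iff b).mpr hb⟩
  -- descent lemma
  have descent : ∀ a b c d : R,
      a ^ 2 - ξ * b ^ 2 - π * c ^ 2 + π * ξ * d ^ 2 = 0 →
      ∃ a₁ b₁ c₁ d₁ : R, a = π * a₁ ∧ b = π * b₁ ∧ c = π * c₁ ∧ d = π * d₁ ∧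
        a₁ ^ 2 - ξ * b₁ ^ 2 - π * c₁ ^ 2 + π * ξ * d₁ ^ 2 = 0 := by
    intro a b c d heq
    obtain ⟨ha, hb⟩ := hmod a b ⟨c ^ 2 - ξ * d ^ 2, by linear_combination heq⟩
    obtain ⟨a₁, rfl⟩ := ha
    obtain ⟨b₁, rfl⟩ := hb
    have heq2 : c ^ 2 - ξ * d ^ 2 - π * a₁ ^ 2 + π * ξ * b₁ ^ 2 = 0 := by
      have h1 : π * (c ^ 2 - ξ * d ^ 2 - π * a₁ ^ 2 + π * ξ * b₁ ^ 2) = π * 0 := by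
        linear_combination -heq
      exact mul_left_cancel₀ hπ.ne_zero h1
    obtain ⟨hc, hd⟩ := hmod c d ⟨a₁ ^ 2 - ξ * b₁ ^ 2, by linear_combination heq2⟩
    obtain ⟨c₁, rfl⟩ := hc
    obtain ⟨d₁, rfl⟩ := hd
    refine ⟨a₁, b₁, c₁, d₁, rfl, rfl, rfl, rfl, ?_⟩
    have h1 : π * (a₁ ^ 2 - ξ * b₁ ^ 2 - π * c₁ ^ 2 + π * ξ * d₁ ^ 2) = π * 0 := by
      linear_combination -heq2
    exact mul_left_cancel₀ hπ.ne_zero h1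
  -- all solutions in R are divisible by every power of π
  have key : ∀ (n : ℕ) (a b c d : R),
      a ^ 2 - ξ * b ^ 2 - π * c ^ 2 + π * ξ * d ^ 2 = 0 →
      π ^ n ∣ a ∧ π ^ n ∣ b ∧ π ^ n ∣ c ∧ π ^ n ∣ d := by
    intro n
    induction n with
    | zero => intro a b c d _; simp
    | succ n ih =>
      intro a b c d heq
      obtain ⟨a₁, b₁, c₁, d₁, rfl, rfl, rfl, rfl, heq'⟩ := descent a b c d heq
      obtain ⟨h1, h2, h3, h4⟩ := ih a₁ b₁ c₁ d₁ heq'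
      exact ⟨by rw [pow_succ']; exact mul_dvd_mul_left π h1,
        by rw [pow_succ']; exact mul_dvd_mul_left π h2,
        by rw [pow_succ']; exact mul_dvd_mul_left π h3,
        by rw [pow_succ']; exact mul_dvd_mul_left π h4⟩
  -- an element divisible by all powers of a prime is zero
  have zero_of : ∀ a : R, (∀ n : ℕ, π ^ n ∣ a) → a = 0 := by
    intro a h
    by_contra ha
    obtain ⟨n, hn⟩ := FiniteMultiplicity.def.mp (FiniteMultiplicity.of_prime_left hπ ha)
    exact hn (h (n + 1))
  -- solutions in R are trivial
  have keyR : ∀ a b c d : R,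
      a ^ 2 - ξ * b ^ 2 - π * c ^ 2 + π * ξ * d ^ 2 = 0 →
      a = 0 ∧ b = 0 ∧ c = 0 ∧ d = 0 := by
    intro a b c d heq
    exact ⟨zero_of a fun n => (key n a b c d heq).1,
      zero_of b fun n => (key n a b c d heq).2.1,
      zero_of c fun n => (key n a b c d heq).2.2.1,
      zero_of d fun n => (key n a b c d heq).2.2.2⟩
  -- now clear denominators
  intro x y z w heq
  obtain ⟨t, ht⟩ := IsLocalization.exist_integer_multiples (nonZeroDivisors R)
    (Finset.univ : Finset (Fin 4)) ![x, y, z, w]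
  have htne : algebraMap R F (t : R) ≠ 0 :=
    IsFractionRing.to_map_ne_zero_of_mem_nonZeroDivisors t.2
  obtain ⟨A, hA⟩ := ht 0 (Finset.mem_univ _)
  obtain ⟨B, hB⟩ := ht 1 (Finset.mem_univ _)
  obtain ⟨C, hC⟩ := ht 2 (Finset.mem_univ _)
  obtain ⟨D, hD⟩ := ht 3 (Finset.mem_univ _)
  simp only [Matrix.cons_val_zero, Matrix.cons_val_one, Matrix.head_cons,
    Matrix.cons_val_two, Matrix.tail_cons, Matrix.cons_val_three,
    Algebra.smul_def] at hA hB hC hD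
  have hmain : algebraMap R F (A ^ 2 - ξ * B ^ 2 - π * C ^ 2 + π * ξ * D ^ 2) = 0 := by
    rw [map_add, map_sub, map_sub, map_pow, map_mul, map_mul, map_mul, map_mul,
      map_pow, map_pow, map_pow, hA, hB, hC, hD]
    have : (algebraMap R F (t : R) * x) ^ 2
        - algebraMap R F ξ * (algebraMap R F (t : R) * y) ^ 2
        - algebraMap R F π * (algebraMap R F (t : R) * z) ^ 2
        + algebraMap R F π * algebraMap R F ξ * (algebraMap R F (t : R) * w) ^ 2
        = (algebraMap R F (t : R)) ^ 2 *
          (x ^ 2 - algebraMap R F ξ * y ^ 2 - algebraMap R F π * z ^ 2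
            + algebraMap R F π * algebraMap R F ξ * w ^ 2) := by ring
    rw [this, heq, mul_zero]
  have h0 : A ^ 2 - ξ * B ^ 2 - π * C ^ 2 + π * ξ * D ^ 2 = 0 := by
    apply IsFractionRing.injective R F
    rw [hmain, map_zero]
  obtain ⟨hA0, hB0, hC0, hD0⟩ := keyR A B C D h0
  have hx : x = 0 := by
    have := hA; rw [hA0, map_zero] at this
    rcases mul_eq_zero.mp this.symm with h | h
    · exact absurd h htne
    · exact h
  have hy : y = 0 := by
    have := hB; rw [hB0, map_zero] at this
    rcases mul_eq_zero.mp this.symm with h | h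
    · exact absurd h htne
    · exact h
  have hz : z = 0 := by
    have := hC; rw [hC0, map_zero] at this
    rcases mul_eq_zero.mp this.symm with h | h
    · exact absurd h htne
    · exact h
  have hw : w = 0 := by
    have := hD; rw [hD0, map_zero] at this
    rcases mul_eq_zero.mp this.symm with h | h
    · exact absurd h htne
    · exact h
  exact ⟨hx, hy, hz, hw⟩
end

section
/- Let R be a unique factorization domain with field of fractions F of characteristic different from 2, let π ∈ R be a prime element, and let ξ, ζ be units of R such that the image of ξ·ζ in the field of fractions of R/(π) is not a square. Then the quadratic forms x² − ξ·y² − π·z² + π·ξ·w² and x² − ζ·y² − π·z² + π·ζ·w² over F are not equivalent (there is no linear isometry between them). -/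
section Aux

open QuadraticMap

variable {F V : Type*} [Field F] [AddCommGroup V] [Module F V]

theorem exists_reflection (q : QuadraticForm F V) (v : V) (hv : q v ≠ 0) :
    ∃ g : q.IsometryEquiv q, ∀ y, g y = y - ((q v)⁻¹ * polar q y v) • v := by
  have hf : ((q v)⁻¹ • ((QuadraticMap.polarBilin q).flip v)) v = 2 := by
    simp only [LinearMap.smul_apply, LinearMap.flip_apply, polarBilin_apply_apply,
      polar_self, smul_eq_mul, nsmul_eq_mul]
    field_simp
    norm_num
  refine ⟨{ Module.reflection hf with map_app' := ?_ }, fun y => ?_⟩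
  · intro m
    have happ : (Module.reflection hf) m = m - ((q v)⁻¹ * polar q m v) • v := by
      rw [Module.reflection_apply]
      simp [LinearMap.smul_apply, LinearMap.flip_apply, smul_eq_mul]
    show q ((Module.reflection hf) m) = q m
    rw [happ, sub_eq_add_neg, ← neg_smul]
    have hexp : q (m + (-(((q v)⁻¹ * polar q m v))) • v)
        = q m + q ((-(((q v)⁻¹ * polar q m v))) • v) + polar q m ((-(((q v)⁻¹ * polar q m v))) • v) := by
      simp [polar]
    rw [hexp, polar_smul_right, QuadraticMap.map_smul]
    simp only [smul_eq_mul]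
    field_simp
    ring
  · show (Module.reflection hf) y = _
    rw [Module.reflection_apply]
    simp [LinearMap.smul_apply, LinearMap.flip_apply, smul_eq_mul]

theorem exists_isometryEquiv_map (h2 : (2:F) ≠ 0) (q : QuadraticForm F V) (u v : V)
    (hu : q u ≠ 0) (huv : q u = q v) : ∃ g : q.IsometryEquiv q, g u = v := by
  have qadd : ∀ x y : V, q (x + y) = q x + q y + polar q x y := by
    intro x y; simp [polar]
  have qps : ∀ x : V, polar q x x = 2 * q x := by
    intro x; rw [polar_self]; simp [nsmul_eq_mul]
  have qsub : ∀ x y : V, q (x - y) = q x + q y - polar q x y := by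
    intro x y
    rw [sub_eq_add_neg, qadd, QuadraticMap.map_neg, polar_neg_right]
    ring
  by_cases h1 : q (u - v) = 0
  · -- use u + v
    have hw : q (u + v) ≠ 0 := by
      rw [qadd]
      rw [qsub] at h1
      have hpuv : polar q u v = q u + q v := by linear_combination -h1
      rw [hpuv, ← huv]
      intro hcon
      have h4 : (2:F) * 2 * q u = 0 := by linear_combination hcon
      exact hu ((mul_eq_zero.mp h4).resolve_left (mul_ne_zero h2 h2))
    obtain ⟨g1, hg1⟩ := exists_reflection q (u + v) hw
    have hg1u : g1 u = -v := by
      rw [hg1]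
      have hpol : polar q u (u + v) = q (u + v) := by
        rw [polar_add_right, qadd, qps, huv]; ring
      rw [hpol, inv_mul_cancel₀ hw, one_smul]
      abel
    have hqv : q v ≠ 0 := huv ▸ hu
    obtain ⟨g2, hg2⟩ := exists_reflection q v hqv
    have hg2v : g2 (-v) = v := by
      rw [hg2, polar_neg_left, qps]
      have hc : (q v)⁻¹ * -(2 * q v) = -2 := by field_simp
      rw [hc, neg_smul, sub_neg_eq_add, two_smul]
      abel
    refine ⟨g1.trans g2, ?_⟩
    show g2 (g1 u) = v
    rw [hg1u, hg2v]
  · obtain ⟨g, hg⟩ := exists_reflection q (u - v) h1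
    refine ⟨g, ?_⟩
    rw [hg]
    have hpol : polar q u (u - v) = q (u - v) := by
      rw [polar_sub_right, qsub, qps, huv]; ring
    rw [hpol, inv_mul_cancel₀ h1, one_smul]
    abel

section Cancel
variable {M₁ M₂ : Type*} [AddCommGroup M₁] [Module F M₁] [AddCommGroup M₂] [Module F M₂]

theorem fst_eq_zero_of_fix (h2 : (2:F) ≠ 0) (a : F) (ha : a ≠ 0)
    (q₁ : QuadraticForm F M₁) (q₂ : QuadraticForm F M₂)
    (ψ : ((a • QuadraticMap.sq (R := F)).prod q₁).IsometryEquiv ((a • QuadraticMap.sq (R := F)).prod q₂))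
    (hψ : ψ ((1 : F), (0 : M₁)) = ((1 : F), (0 : M₂))) (m : M₁) :
    (ψ ((0 : F), m)).1 = 0 := by
  have hadd : ψ ((0:F), m) + ψ ((1:F), (0:M₁)) = ψ (((0:F), m) + ((1:F), (0:M₁))) :=
    (map_add ψ _ _).symm
  have hpol : polar (⇑((a • QuadraticMap.sq (R := F)).prod q₂)) (ψ ((0:F), m)) (ψ ((1:F), (0:M₁)))
      = polar (⇑((a • QuadraticMap.sq (R := F)).prod q₁)) ((0:F), m) ((1:F), (0:M₁)) := by
    simp only [polar, hadd, QuadraticMap.IsometryEquiv.map_app]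
  rw [hψ] at hpol
  have hL : polar (⇑((a • QuadraticMap.sq (R := F)).prod q₂)) (ψ ((0:F), m)) ((1:F), (0:M₂))
      = 2 * a * (ψ ((0:F), m)).1 := by
    simp only [polar, QuadraticMap.prod_apply, QuadraticMap.smul_apply,
      QuadraticMap.sq_apply, Prod.fst_add, Prod.snd_add, smul_eq_mul, add_zero, map_zero]
    ring
  have hR : polar (⇑((a • QuadraticMap.sq (R := F)).prod q₁)) ((0:F), m) ((1:F), (0:M₁)) = 0 := by
    simp only [polar, QuadraticMap.prod_apply, QuadraticMap.smul_apply,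
      QuadraticMap.sq_apply, Prod.mk_add_mk, smul_eq_mul, add_zero, zero_add, map_zero]
    ring
  rw [hL, hR] at hpol
  rcases mul_eq_zero.mp hpol with h | h
  · exact absurd h (mul_ne_zero h2 ha)
  · exact h

theorem cancel_one_dim (h2 : (2:F) ≠ 0) (a : F) (ha : a ≠ 0)
    (q₁ : QuadraticForm F M₁) (q₂ : QuadraticForm F M₂)
    (h : ((a • QuadraticMap.sq (R := F)).prod q₁).Equivalent ((a • QuadraticMap.sq (R := F)).prod q₂)) :
    q₁.Equivalent q₂ := by
  obtain ⟨φ⟩ := h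
  set Q₁ := (a • QuadraticMap.sq (R := F)).prod q₁ with hQ₁
  set Q₂ := (a • QuadraticMap.sq (R := F)).prod q₂ with hQ₂
  have hval : ∀ (x : F) (m : M₂), Q₂ (x, m) = a * (x * x) + q₂ m := by
    intro x m
    simp [hQ₂, QuadraticMap.prod_apply, QuadraticMap.smul_apply, QuadraticMap.sq_apply,
      smul_eq_mul]
  have hu : Q₂ (φ ((1:F), (0:M₁))) = a := by
    rw [φ.map_app]
    simp [hQ₁, QuadraticMap.prod_apply, QuadraticMap.smul_apply, QuadraticMap.sq_apply,
      smul_eq_mul]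
  have he : Q₂ ((1:F), (0:M₂)) = a := by rw [hval]; simp
  obtain ⟨g, hg⟩ := exists_isometryEquiv_map h2 Q₂ (φ ((1:F), (0:M₁))) ((1:F), (0:M₂))
    (hu ▸ ha) (by rw [hu, he])
  set ψ := φ.trans g with hψdef
  have hψ : ψ ((1 : F), (0 : M₁)) = ((1 : F), (0 : M₂)) := hg
  have hψsymm : ψ.symm ((1 : F), (0 : M₂)) = ((1 : F), (0 : M₁)) := by
    rw [← hψ]
    exact ψ.toLinearEquiv.symm_apply_apply _
  have hψ0 : ∀ m : M₁, ψ ((0:F), m) = ((0:F), (ψ ((0:F), m)).2) :=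
    fun m => Prod.ext (fst_eq_zero_of_fix h2 a ha q₁ q₂ ψ hψ m) rfl
  have hψs0 : ∀ m : M₂, ψ.symm ((0:F), m) = ((0:F), (ψ.symm ((0:F), m)).2) :=
    fun m => Prod.ext (fst_eq_zero_of_fix h2 a ha q₂ q₁ ψ.symm hψsymm m) rfl
  let L : M₁ →ₗ[F] M₂ :=
    (LinearMap.snd F F M₂) ∘ₗ (ψ.toLinearEquiv : (F × M₁) →ₗ[F] (F × M₂)) ∘ₗ (LinearMap.inr F F M₁)
  let L' : M₂ →ₗ[F] M₁ :=
    (LinearMap.snd F F M₁) ∘ₗ (ψ.toLinearEquiv.symm : (F × M₂) →ₗ[F] (F × M₁)) ∘ₗ (LinearMap.inr F F M₂)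
  have hLapp : ∀ m : M₁, ψ ((0:F), m) = ((0:F), L m) := hψ0
  have hL'app : ∀ m : M₂, ψ.symm ((0:F), m) = ((0:F), L' m) := hψs0
  have hLL' : ∀ m : M₂, L (L' m) = m := by
    intro m
    have : ψ ((0:F), L' m) = ((0:F), m) := by
      rw [← hL'app m]
      exact ψ.toLinearEquiv.apply_symm_apply _
    show (ψ ((0:F), L' m)).2 = m
    rw [this]
  have hL'L : ∀ m : M₁, L' (L m) = m := by
    intro m
    have : ψ.symm ((0:F), L m) = ((0:F), m) := by
      rw [← hLapp m]
      exact ψ.toLinearEquiv.symm_apply_apply _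
    show (ψ.symm ((0:F), L m)).2 = m
    rw [this]
  refine ⟨{ LinearEquiv.ofLinear (re₁₂ := RingHomInvPair.ids) (re₂₁ := RingHomInvPair.ids) L L'
      (by ext m
          simp only [LinearMap.coe_comp, Function.comp_apply, LinearMap.id_coe, id_eq]
          exact hLL' m)
      (by ext m
          simp only [LinearMap.coe_comp, Function.comp_apply, LinearMap.id_coe, id_eq]
          exact hL'L m) with
    map_app' := ?_ }⟩
  intro m
  show q₂ (L m) = q₁ m
  have h1 : Q₂ ((0:F), L m) = q₂ (L m) := by rw [hval]; simp
  have h2' : Q₁ ((0:F), m) = q₁ m := by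
    simp [hQ₁, QuadraticMap.prod_apply, QuadraticMap.smul_apply, QuadraticMap.sq_apply,
      smul_eq_mul]
  rw [← h1, ← hLapp m, ψ.map_app, h2']

end Cancel

theorem wss_equiv_nested (a b c d : F) :
    (QuadraticMap.weightedSumSquares F ![a, b, c, d]).Equivalent
      ((a • QuadraticMap.sq (R := F)).prod ((c • QuadraticMap.sq (R := F)).prod
        ((b • QuadraticMap.sq (R := F)).prod (d • QuadraticMap.sq (R := F))))) := by
  refine ⟨{ LinearEquiv.mk ⟨⟨fun v => (v 0, (v 2, (v 1, v 3))), fun x y => rfl⟩, fun r v => rfl⟩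
      (fun p => ![p.1, p.2.2.1, p.2.1, p.2.2.2]) ?_ ?_ with map_app' := ?_ }⟩
  · intro v
    funext i
    fin_cases i <;> rfl
  · intro p
    rfl
  · intro v
    show a • (v 0 * v 0) + (c • (v 2 * v 2) + (b • (v 1 * v 1) + d • (v 3 * v 3)))
      = QuadraticMap.weightedSumSquares F ![a, b, c, d] v
    rw [QuadraticMap.weightedSumSquares_apply, Fin.sum_univ_four]
    simp only [Matrix.cons_val_zero, Matrix.cons_val_one, Matrix.head_cons, Matrix.cons_val_two,
      Matrix.tail_cons, Matrix.cons_val_three, smul_eq_mul, Matrix.head_fin_const]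
    ring

theorem descent_mod {R : Type*} [CommRing R] [IsDomain R] (π : R) (hπ : Prime π) (u : R) :
    ∀ n : ℕ, ∀ t r s : R, ¬ (π ^ n ∣ t) → u * t ^ 2 = r ^ 2 - π * s ^ 2 →
    ∃ a b : R, ¬ (π ∣ b) ∧ π ∣ (u * b ^ 2 - a ^ 2) := by
  intro n
  induction n with
  | zero => intro t r s hdvd _; exact absurd (one_dvd t) (by simpa using hdvd)
  | succ n ih =>
    intro t r s hdvd heq
    by_cases hπt : π ∣ t
    · obtain ⟨t', rfl⟩ := hπt
      have hr : π ∣ r := by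
        refine hπ.dvd_of_dvd_pow (n := 2) ⟨u * π * t' ^ 2 + s ^ 2, ?_⟩
        linear_combination -heq
      obtain ⟨r', rfl⟩ := hr
      have hcan : u * π * t' ^ 2 = π * r' ^ 2 - s ^ 2 :=
        mul_left_cancel₀ hπ.ne_zero (by linear_combination heq)
      have hs : π ∣ s := by
        refine hπ.dvd_of_dvd_pow (n := 2) ⟨r' ^ 2 - u * t' ^ 2, ?_⟩
        linear_combination hcan
      obtain ⟨s', rfl⟩ := hs
      have heq' : u * t' ^ 2 = r' ^ 2 - π * s' ^ 2 :=
        mul_left_cancel₀ hπ.ne_zero (by linear_combination hcan)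
      refine ih t' r' s' (fun hd => hdvd ?_) heq'
      obtain ⟨c, rfl⟩ := hd
      exact ⟨c, by ring⟩
    · exact ⟨r, t, hπt, ⟨-(s ^ 2), by linear_combination heq⟩⟩

end Aux

/-- Let `R` be a unique factorization domain with field of fractions `F` of characteristic
different from `2`, let `π ∈ R` be a prime element, and let `ξ, ζ` be units of `R` such that
the image of `ξ·ζ` in the field of fractions of `R/(π)` is not a square.  Then the quadratic
forms `⟨1, −ξ, −π, πξ⟩` and `⟨1, −ζ, −π, πζ⟩` over `F` are not equivalent. -/
theorem quaternion_norm_forms_not_equivalent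
    (R : Type*) [CommRing R] [IsDomain R] [UniqueFactorizationMonoid R]
    (F : Type*) [Field F] [Algebra R F] [IsFractionRing R F]
    (h2 : (2 : F) ≠ 0)
    (π : R) (hπ : Prime π) (ξ ζ : R) (hξ : IsUnit ξ) (hζ : IsUnit ζ)
    (hns : ¬ IsSquare (algebraMap (R ⧸ Ideal.span {π}) (FractionRing (R ⧸ Ideal.span {π}))
      (Ideal.Quotient.mk (Ideal.span {π}) (ξ * ζ)))) :
    ¬ (QuadraticMap.weightedSumSquares F
        ![1, -(algebraMap R F ξ), -(algebraMap R F π), algebraMap R F π * algebraMap R F ξ]).Equivalent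
      (QuadraticMap.weightedSumSquares F
        ![1, -(algebraMap R F ζ), -(algebraMap R F π), algebraMap R F π * algebraMap R F ζ]) := by
  intro h
  have hπ0 : algebraMap R F π ≠ 0 := fun hc =>
    hπ.ne_zero (IsFractionRing.to_map_eq_zero_iff.mp hc)
  -- move to nested product forms and cancel the common slots
  have hnest := ((wss_equiv_nested (1 : F) (-(algebraMap R F ξ)) (-(algebraMap R F π))
      (algebraMap R F π * algebraMap R F ξ)).symm.trans h).trans
    (wss_equiv_nested (1 : F) (-(algebraMap R F ζ)) (-(algebraMap R F π))
      (algebraMap R F π * algebraMap R F ζ))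
  have hc1 := cancel_one_dim h2 1 one_ne_zero _ _ hnest
  have hc2 := cancel_one_dim h2 (-(algebraMap R F π)) (neg_ne_zero.mpr hπ0) _ _ hc1
  obtain ⟨φ⟩ := hc2
  have hval := φ.map_app ((1 : F), (0 : F))
  simp only [QuadraticMap.prod_apply, QuadraticMap.smul_apply, QuadraticMap.sq_apply,
    smul_eq_mul, mul_zero, add_zero, mul_one, zero_mul] at hval
  set c := (φ ((1 : F), (0 : F))).1 with hcdef
  set d := (φ ((1 : F), (0 : F))).2 with hddef
  -- hval : -ζ' * (c * c) + π'*ζ' * (d * d) = -ξ'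
  have hCD : algebraMap R F ξ * algebraMap R F ζ
      = (algebraMap R F ζ * c) ^ 2 - algebraMap R F π * (algebraMap R F ζ * d) ^ 2 := by
    linear_combination algebraMap R F ζ * hval
  obtain ⟨r₁, t₁, ht₁, hC⟩ := IsFractionRing.div_surjective (A := R) (algebraMap R F ζ * c)
  obtain ⟨r₂, t₂, ht₂, hD⟩ := IsFractionRing.div_surjective (A := R) (algebraMap R F ζ * d)
  have ht₁0 : t₁ ≠ 0 := mem_nonZeroDivisors_iff_ne_zero.mp ht₁
  have ht₂0 : t₂ ≠ 0 := mem_nonZeroDivisors_iff_ne_zero.mp ht₂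
  have ht₁F : algebraMap R F t₁ ≠ 0 := fun hc => ht₁0 (IsFractionRing.to_map_eq_zero_iff.mp hc)
  have ht₂F : algebraMap R F t₂ ≠ 0 := fun hc => ht₂0 (IsFractionRing.to_map_eq_zero_iff.mp hc)
  rw [← hC, ← hD] at hCD
  have hgoalF : algebraMap R F ξ * algebraMap R F ζ * (algebraMap R F t₁ * algebraMap R F t₂) ^ 2
      = (algebraMap R F r₁ * algebraMap R F t₂) ^ 2
        - algebraMap R F π * (algebraMap R F r₂ * algebraMap R F t₁) ^ 2 := by
    field_simp at hCD
    linear_combination hCD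
  have heqR : ξ * ζ * (t₁ * t₂) ^ 2 = (r₁ * t₂) ^ 2 - π * (r₂ * t₁) ^ 2 := by
    apply IsFractionRing.injective R F
    simp only [_root_.map_mul, _root_.map_sub, _root_.map_pow]
    linear_combination hgoalF
  have ht0 : t₁ * t₂ ≠ 0 := mul_ne_zero ht₁0 ht₂0
  obtain ⟨n, a0, hna, hta⟩ := WfDvdMonoid.max_power_factor ht0 hπ.irreducible
  have hnd : ¬ π ^ (n + 1) ∣ (t₁ * t₂) := by
    rw [hta, pow_succ]
    intro hd
    exact hna ((mul_dvd_mul_iff_left (pow_ne_zero n hπ.ne_zero)).mp hd)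
  obtain ⟨a, b, hb, hdvd2⟩ := descent_mod π hπ (ξ * ζ) (n + 1) (t₁ * t₂) (r₁ * t₂) (r₂ * t₁)
    hnd heqR
  haveI hprime : (Ideal.span {π}).IsPrime := (Ideal.span_singleton_prime hπ.ne_zero).mpr hπ
  have hbq : Ideal.Quotient.mk (Ideal.span {π}) b ≠ 0 := fun hc =>
    hb (Ideal.mem_span_singleton.mp (Ideal.Quotient.eq_zero_iff_mem.mp hc))
  have hrel : Ideal.Quotient.mk (Ideal.span {π}) (ξ * ζ) * Ideal.Quotient.mk (Ideal.span {π}) b ^ 2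
      = Ideal.Quotient.mk (Ideal.span {π}) a ^ 2 := by
    have h0 : Ideal.Quotient.mk (Ideal.span {π}) (ξ * ζ * b ^ 2 - a ^ 2) = 0 :=
      Ideal.Quotient.eq_zero_iff_mem.mpr (Ideal.mem_span_singleton.mpr hdvd2)
    rw [_root_.map_sub, _root_.map_mul, _root_.map_pow, _root_.map_pow, sub_eq_zero] at h0
    exact h0
  apply hns
  have hkb : algebraMap (R ⧸ Ideal.span {π}) (FractionRing (R ⧸ Ideal.span {π}))
      (Ideal.Quotient.mk (Ideal.span {π}) b) ≠ 0 := fun hc =>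
    hbq (IsFractionRing.to_map_eq_zero_iff.mp hc)
  refine ⟨algebraMap (R ⧸ Ideal.span {π}) (FractionRing (R ⧸ Ideal.span {π}))
      (Ideal.Quotient.mk (Ideal.span {π}) a)
    / algebraMap (R ⧸ Ideal.span {π}) (FractionRing (R ⧸ Ideal.span {π}))
      (Ideal.Quotient.mk (Ideal.span {π}) b), ?_⟩
  have hrelk := congrArg (algebraMap (R ⧸ Ideal.span {π}) (FractionRing (R ⧸ Ideal.span {π}))) hrel
  simp only [_root_.map_mul, _root_.map_pow] at hrelk
  rw [div_mul_div_comm, eq_div_iff (mul_ne_zero hkb hkb)]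
  simp only [_root_.map_mul]
  linear_combination hrelk
end

section
/- Let R be a unique factorization domain with field of fractions F of characteristic different from 2, let π ∈ R be a prime element, and let ξ be a unit of R whose image in the field of fractions of R/(π) is not a square. Then the quaternion F-algebra ℍ[F; ξ, π] (the four-dimensional F-algebra with basis 1, i, j, k and relations i² = ξ, j² = π, ij = −ji = k) is a division ring: every nonzero element is invertible. -/
open Quaternion

/-- Key mod-π step: if `π ∣ a² - ξ b²` and `ξ` is not a square in `Frac(R/(π))`,
then `π ∣ a` and `π ∣ b`. -/
theorem quat_key_mod
    (R : Type*) [CommRing R] [IsDomain R]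
    (π : R) (hπ : Prime π) (ξ : R)
    (hns : ¬ IsSquare (algebraMap (R ⧸ Ideal.span {π}) (FractionRing (R ⧸ Ideal.span {π}))
      (Ideal.Quotient.mk (Ideal.span {π}) ξ)))
    (a b : R) (h : π ∣ a ^ 2 - ξ * b ^ 2) : π ∣ a ∧ π ∣ b := by
  haveI : (Ideal.span {π}).IsPrime := (Ideal.span_singleton_prime hπ.ne_zero).mpr hπ
  set Q := R ⧸ Ideal.span {π}
  let mk : R →+* Q := Ideal.Quotient.mk (Ideal.span {π})
  have hmk : ∀ r : R, mk r = 0 ↔ π ∣ r := fun r =>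
    Iff.trans Ideal.Quotient.eq_zero_iff_mem (Ideal.mem_span_singleton)
  have heq : mk a ^ 2 = mk ξ * mk b ^ 2 := by
    have : mk (a ^ 2 - ξ * b ^ 2) = 0 := (hmk _).mpr h
    rw [map_sub, map_mul, map_pow, map_pow, sub_eq_zero] at this
    exact this
  have hb : π ∣ b := by
    by_contra hb
    apply hns
    have hbQ : mk b ≠ 0 := fun h0 => hb ((hmk b).mp h0)
    set φ := algebraMap Q (FractionRing Q) with hφdef
    have hφ : Function.Injective φ := IsFractionRing.injective Q (FractionRing Q)
    have hbk : φ (mk b) ≠ 0 := fun h0 => hbQ (hφ (by simpa using h0))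
    refine ⟨φ (mk a) / φ (mk b), ?_⟩
    have hk : φ (mk a) ^ 2 = φ (mk ξ) * φ (mk b) ^ 2 := by
      have := congrArg φ heq
      rwa [map_pow, map_mul, map_pow] at this
    field_simp
    linear_combination -hk
  obtain ⟨c, rfl⟩ := hb
  obtain ⟨d, hd⟩ := h
  have ha : π ∣ a := by
    have : π ∣ a ^ 2 := ⟨d + ξ * c ^ 2 * π, by linear_combination hd⟩
    exact hπ.dvd_of_dvd_pow this
  exact ⟨ha, ⟨c, rfl⟩⟩

/-- Descent step: a solution of the norm equation has all coordinates divisible by `π`. -/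
theorem quat_descent
    (R : Type*) [CommRing R] [IsDomain R]
    (π : R) (hπ : Prime π) (ξ : R)
    (hns : ¬ IsSquare (algebraMap (R ⧸ Ideal.span {π}) (FractionRing (R ⧸ Ideal.span {π}))
      (Ideal.Quotient.mk (Ideal.span {π}) ξ)))
    (a b c d : R) (h : a ^ 2 - ξ * b ^ 2 - π * c ^ 2 + ξ * π * d ^ 2 = 0) :
    π ∣ a ∧ π ∣ b ∧ π ∣ c ∧ π ∣ d := by
  have hab : π ∣ a ^ 2 - ξ * b ^ 2 := ⟨c ^ 2 - ξ * d ^ 2, by linear_combination h⟩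
  obtain ⟨ha, hb⟩ := quat_key_mod R π hπ ξ hns a b hab
  obtain ⟨a₀, rfl⟩ := ha
  obtain ⟨b₀, rfl⟩ := hb
  have hcd : π ∣ c ^ 2 - ξ * d ^ 2 := by
    refine ⟨a₀ ^ 2 - ξ * b₀ ^ 2, ?_⟩
    apply mul_left_cancel₀ hπ.ne_zero
    linear_combination -h
  obtain ⟨hc, hd⟩ := quat_key_mod R π hπ ξ hns c d hcd
  exact ⟨⟨a₀, rfl⟩, ⟨b₀, rfl⟩, hc, hd⟩

/-- Infinite descent: every power of `π` divides each coordinate of a solution. -/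
theorem quat_pow_dvd
    (R : Type*) [CommRing R] [IsDomain R]
    (π : R) (hπ : Prime π) (ξ : R)
    (hns : ¬ IsSquare (algebraMap (R ⧸ Ideal.span {π}) (FractionRing (R ⧸ Ideal.span {π}))
      (Ideal.Quotient.mk (Ideal.span {π}) ξ)))
    (n : ℕ) :
    ∀ a b c d : R, a ^ 2 - ξ * b ^ 2 - π * c ^ 2 + ξ * π * d ^ 2 = 0 →
    π ^ n ∣ a ∧ π ^ n ∣ b ∧ π ^ n ∣ c ∧ π ^ n ∣ d := by
  induction n with
  | zero => intro a b c d _; simp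
  | succ n ih =>
    intro a b c d h
    obtain ⟨⟨a₀, rfl⟩, ⟨b₀, rfl⟩, ⟨c₀, rfl⟩, ⟨d₀, rfl⟩⟩ := ih a b c d h
    have hpn : (π ^ n) ^ 2 ≠ 0 := pow_ne_zero _ (pow_ne_zero _ hπ.ne_zero)
    have h₀ : a₀ ^ 2 - ξ * b₀ ^ 2 - π * c₀ ^ 2 + ξ * π * d₀ ^ 2 = 0 := by
      apply mul_left_cancel₀ hpn
      linear_combination h
    obtain ⟨ha, hb, hc, hd⟩ := quat_descent R π hπ ξ hns a₀ b₀ c₀ d₀ h₀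
    obtain ⟨ta, rfl⟩ := ha
    obtain ⟨tb, rfl⟩ := hb
    obtain ⟨tc, rfl⟩ := hc
    obtain ⟨td, rfl⟩ := hd
    exact ⟨⟨ta, by ring⟩, ⟨tb, by ring⟩, ⟨tc, by ring⟩, ⟨td, by ring⟩⟩

/-- Anisotropy over `R`: the only solution of the norm equation is zero. -/
theorem quat_aniso
    (R : Type*) [CommRing R] [IsDomain R] [UniqueFactorizationMonoid R]
    (π : R) (hπ : Prime π) (ξ : R)
    (hns : ¬ IsSquare (algebraMap (R ⧸ Ideal.span {π}) (FractionRing (R ⧸ Ideal.span {π}))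
      (Ideal.Quotient.mk (Ideal.span {π}) ξ)))
    (a b c d : R) (h : a ^ 2 - ξ * b ^ 2 - π * c ^ 2 + ξ * π * d ^ 2 = 0) :
    a = 0 ∧ b = 0 ∧ c = 0 ∧ d = 0 := by
  have key : ∀ r : R, (∀ n : ℕ, π ^ n ∣ r) → r = 0 := by
    intro r hr
    by_contra hr0
    obtain ⟨n, hn⟩ := FiniteMultiplicity.of_prime_left hπ hr0
    exact hn (hr (n + 1))
  exact ⟨key a fun n => (quat_pow_dvd R π hπ ξ hns n a b c d h).1,
    key b fun n => (quat_pow_dvd R π hπ ξ hns n a b c d h).2.1,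
    key c fun n => (quat_pow_dvd R π hπ ξ hns n a b c d h).2.2.1,
    key d fun n => (quat_pow_dvd R π hπ ξ hns n a b c d h).2.2.2⟩

/-- Let `R` be a unique factorization domain with field of fractions `F` of characteristic
different from `2`, let `π ∈ R` be a prime element, and let `ξ` be a unit of `R` whose image
in the field of fractions of `R/(π)` is not a square.  Then the quaternion `F`-algebra
`ℍ[F; ξ, π]` is a division ring: every nonzero element is invertible. -/
theorem quaternionAlgebra_isDivisionRing
    (R : Type*) [CommRing R] [IsDomain R] [UniqueFactorizationMonoid R]
    (F : Type*) [Field F] [Algebra R F] [IsFractionRing R F]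
    (h2 : (2 : F) ≠ 0)
    (π : R) (hπ : Prime π) (ξ : R) (hξ : IsUnit ξ)
    (hns : ¬ IsSquare (algebraMap (R ⧸ Ideal.span {π}) (FractionRing (R ⧸ Ideal.span {π}))
      (Ideal.Quotient.mk (Ideal.span {π}) ξ))) :
    ∀ x : ℍ[F, algebraMap R F ξ, algebraMap R F π], x ≠ 0 → IsUnit x := by
  intro x hx
  set N : F := x.re ^ 2 - algebraMap R F ξ * x.imI ^ 2 - algebraMap R F π * x.imJ ^ 2
    + algebraMap R F ξ * algebraMap R F π * x.imK ^ 2 with hN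
  -- the norm is nonzero
  have hN0 : N ≠ 0 := by
    intro h0
    -- clear denominators
    obtain ⟨t, ht⟩ := IsLocalization.exist_integer_multiples_of_finite
      (nonZeroDivisors R) (S := F) ![x.re, x.imI, x.imJ, x.imK]
    obtain ⟨a, ha⟩ := ht 0
    obtain ⟨b, hb⟩ := ht 1
    obtain ⟨c, hc⟩ := ht 2
    obtain ⟨d, hd⟩ := ht 3
    rw [Algebra.smul_def] at ha hb hc hd
    simp only [Matrix.cons_val_zero, Matrix.cons_val_one, Matrix.head_cons,
      Matrix.cons_val_two, Matrix.tail_cons, Matrix.cons_val_three] at ha hb hc hd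
    have hinj : Function.Injective (algebraMap R F) := IsFractionRing.injective R F
    have ht0 : algebraMap R F (t : R) ≠ 0 := fun h =>
      nonZeroDivisors.coe_ne_zero t (hinj (by rw [h, map_zero]))
    have expand : algebraMap R F (a ^ 2 - ξ * b ^ 2 - π * c ^ 2 + ξ * π * d ^ 2)
        = (algebraMap R F (t : R)) ^ 2 * N := by
      rw [map_add, map_sub, map_sub, map_mul, map_mul, map_mul, map_mul, map_pow, map_pow,
        map_pow, map_pow, ha, hb, hc, hd, hN]
      ring
    have heqR : a ^ 2 - ξ * b ^ 2 - π * c ^ 2 + ξ * π * d ^ 2 = 0 := by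
      apply hinj
      rw [expand, h0, mul_zero, map_zero]
    obtain ⟨ha0, hb0, hc0, hd0⟩ := quat_aniso R π hπ ξ hns a b c d heqR
    apply hx
    have hzero : ∀ (y : F) (r : R), algebraMap R F r = algebraMap R F (t : R) * y →
        r = 0 → y = 0 := by
      intro y r hr h0'
      rw [h0', map_zero] at hr
      exact (mul_eq_zero.mp hr.symm).resolve_left ht0
    ext
    · exact hzero x.re a ha ha0
    · exact hzero x.imI b hb hb0
    · exact hzero x.imJ c hc hc0
    · exact hzero x.imK d hd hd0
  -- x * star x = N and star x * x = N
  have hxs : x * star x = (N : ℍ[F, algebraMap R F ξ, algebraMap R F π]) := by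
    rw [QuaternionAlgebra.mul_star_eq_coe]
    congr 1
    simp only [QuaternionAlgebra.re_mul, QuaternionAlgebra.re_star, QuaternionAlgebra.imI_star,
      QuaternionAlgebra.imJ_star, QuaternionAlgebra.imK_star, hN]
    ring
  have hsx : star x * x = (N : ℍ[F, algebraMap R F ξ, algebraMap R F π]) := by
    rw [QuaternionAlgebra.star_mul_eq_coe]
    congr 1
    simp only [QuaternionAlgebra.re_mul, QuaternionAlgebra.re_star, QuaternionAlgebra.imI_star,
      QuaternionAlgebra.imJ_star, QuaternionAlgebra.imK_star, hN]
    ring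
  refine ⟨⟨x, N⁻¹ • star x, ?_, ?_⟩, rfl⟩
  · rw [mul_smul_comm, hxs, ← QuaternionAlgebra.coe_mul_eq_smul, ← QuaternionAlgebra.coe_mul,
      inv_mul_cancel₀ hN0, QuaternionAlgebra.coe_one]
  · rw [smul_mul_assoc, hsx, ← QuaternionAlgebra.coe_mul_eq_smul, ← QuaternionAlgebra.coe_mul,
      inv_mul_cancel₀ hN0, QuaternionAlgebra.coe_one]
end

section
/- Let R be a commutative ring and L a finitely generated projective R-module such that there exists an R-module isomorphism L ⊗[R] L ≅ R. Then the commutativity isomorphism τ : L ⊗[R] L → L ⊗[R] L determined by x ⊗ y ↦ y ⊗ x is the identity map; consequently, every R-bilinear form B : L × L → R is symmetric. -/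
open TensorProduct

section Aux

variable {R : Type*} [CommRing R] {L : Type*} [AddCommGroup L] [Module R L]
  [Module.Finite R L] [Module.Projective R L]

/-- If `L ⊗ L ≅ R` then the images of the "squares" `x ⊗ x` generate the unit ideal. -/
lemma square_span_eq_top_of_tensor_equiv (e : (L ⊗[R] L) ≃ₗ[R] R) :
    Ideal.span (Set.range fun x : L => e (x ⊗ₜ[R] x)) = ⊤ := by
  by_contra hJ
  obtain ⟨m, hm, hJm⟩ := Ideal.exists_le_maximal _ hJ
  haveI := hm.isPrime
  set S := m.primeCompl with hS
  let A := Localization.AtPrime m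
  haveI : Module.FinitePresentation A (A ⊗[R] L) :=
    Module.finitePresentation_of_projective A (A ⊗[R] L)
  haveI : Module.Free A (A ⊗[R] L) := Module.free_of_flat_of_isLocalRing
  -- the base-changed equivalence
  let G : ((A ⊗[R] L) ⊗[A] (A ⊗[R] L)) ≃ₗ[A] A :=
    (AlgebraTensorModule.cancelBaseChange R A A (A ⊗[R] L) L) ≪≫ₗ
      (AlgebraTensorModule.assoc R R A A L L) ≪≫ₗ
        (e.baseChange R A _ _) ≪≫ₗ (AlgebraTensorModule.rid R A A)
  have hG : ∀ x y : L, G (((1 : A) ⊗ₜ[R] x) ⊗ₜ[A] ((1 : A) ⊗ₜ[R] y))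
      = algebraMap R A (e (x ⊗ₜ[R] y)) := by
    intro x y
    simp only [G, LinearEquiv.trans_apply, AlgebraTensorModule.cancelBaseChange_tmul,
      one_smul, AlgebraTensorModule.assoc_tmul, LinearEquiv.baseChange,
      AlgebraTensorModule.congr_tmul, LinearEquiv.refl_apply,
      AlgebraTensorModule.rid_tmul, Algebra.smul_def, mul_one]
  -- rank considerations: A ⊗ L is free of rank 1
  have hrank : Module.finrank A ((A ⊗[R] L) ⊗[A] (A ⊗[R] L)) = 1 := by
    rw [G.finrank_eq, Module.finrank_self]
  have hrank1 : Module.finrank A (A ⊗[R] L) = 1 := by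
    rw [Module.finrank_tensorProduct] at hrank
    exact Nat.eq_one_of_mul_eq_one_right hrank
  -- choose a basis element
  let b : Module.Basis (Module.Free.ChooseBasisIndex A (A ⊗[R] L)) A (A ⊗[R] L) :=
    Module.Free.chooseBasis A (A ⊗[R] L)
  have hcard : Fintype.card (Module.Free.ChooseBasisIndex A (A ⊗[R] L)) = 1 := by
    rw [← Module.finrank_eq_card_chooseBasisIndex, hrank1]
  obtain ⟨i₀, hi₀⟩ := Fintype.card_eq_one_iff.mp hcard
  set ℓ : A ⊗[R] L := b i₀ with hℓ
  -- G (ℓ ⊗ ℓ) is a unit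
  have hspan : Submodule.span A {ℓ ⊗ₜ[A] ℓ} = ⊤ := by
    have h1 := (Module.Basis.tensorProduct b b).span_eq
    have h2 : Set.range ⇑(Module.Basis.tensorProduct b b) = {ℓ ⊗ₜ[A] ℓ} := by
      ext t
      constructor
      · rintro ⟨⟨i, j⟩, rfl⟩
        rw [hi₀ i, hi₀ j, Module.Basis.tensorProduct_apply]
        rfl
      · rintro rfl
        exact ⟨(i₀, i₀), Module.Basis.tensorProduct_apply b b i₀ i₀⟩
    rw [h2] at h1
    exact h1
  have hunit : IsUnit (G (ℓ ⊗ₜ[A] ℓ)) := by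
    have hmem : G.symm 1 ∈ Submodule.span A {ℓ ⊗ₜ[A] ℓ} := by rw [hspan]; trivial
    obtain ⟨c, hc⟩ := Submodule.mem_span_singleton.mp hmem
    have : (1 : A) = c * G (ℓ ⊗ₜ[A] ℓ) := by
      conv_lhs => rw [← G.apply_symm_apply 1, ← hc]
      rw [map_smul, smul_eq_mul]
    exact IsUnit.of_mul_eq_one (a := G (ℓ ⊗ₜ[A] ℓ)) c (by rw [mul_comm]; exact this.symm)
  -- ℓ is a localized element: s • ℓ = 1 ⊗ x
  let f := LocalizedModule.mkLinearMap S L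
  have bc : IsBaseChange A f := IsLocalizedModule.isBaseChange S A f
  let EL : A ⊗[R] L ≃ₗ[A] LocalizedModule S L := bc.equiv
  obtain ⟨⟨x, s⟩, hx⟩ := IsLocalizedModule.mk'_surjective S f (EL ℓ)
  simp only [Function.uncurry_apply_pair] at hx
  have h1x : EL ((1 : A) ⊗ₜ[R] x) = f x := by
    exact (bc.equiv_tmul 1 x).trans (one_smul A _)
  have hsl : (algebraMap R A (s : R)) • ℓ = (1 : A) ⊗ₜ[R] x := by
    apply EL.injective
    rw [map_smul, ← hx, h1x, algebraMap_smul, ← Submonoid.smul_def]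
    exact IsLocalizedModule.mk'_cancel' f x s
  -- conclude e (x ⊗ x) is a unit in A, hence not in m
  have ha : IsUnit (algebraMap R A (s : R)) := IsLocalization.map_units A s
  have hxx : IsUnit (algebraMap R A (e (x ⊗ₜ[R] x))) := by
    rw [← hG x x, ← hsl, smul_tmul_smul, map_smul, smul_eq_mul]
    exact (ha.mul ha).mul hunit
  have hmem : e (x ⊗ₜ[R] x) ∈ m := hJm (Ideal.subset_span ⟨x, rfl⟩)
  exact ((IsLocalization.AtPrime.isUnit_to_map_iff A m _).mp hxx) hmem

end Aux

/-- Let `R` be a commutative ring and `L` a finitely generated projective `R`-module with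
`L ⊗[R] L ≅ R`.  Then the commutativity isomorphism `τ : L ⊗[R] L → L ⊗[R] L`,
`x ⊗ y ↦ y ⊗ x`, is the identity; consequently, every `R`-bilinear form `B : L × L → R`
is symmetric. -/
theorem tensor_comm_eq_id_and_bilinear_symm
    (R : Type*) [CommRing R] (L : Type*) [AddCommGroup L] [Module R L]
    [Module.Finite R L] [Module.Projective R L]
    (h : Nonempty ((L ⊗[R] L) ≃ₗ[R] R)) :
    TensorProduct.comm R L L = LinearEquiv.refl R (L ⊗[R] L) ∧
      ∀ B : L →ₗ[R] L →ₗ[R] R, ∀ x y : L, B x y = B y x := by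
  obtain ⟨e⟩ := h
  set τ := TensorProduct.comm R L L with hτ
  set u : R := e (τ (e.symm 1)) with hu
  have hmul : ∀ t : L ⊗[R] L, e (τ t) = e t • u := by
    intro t
    have : e (τ t) = e (τ (e.symm (e t))) := by rw [e.symm_apply_apply]
    rw [this]
    calc e (τ (e.symm (e t))) = e (τ (e.symm ((e t) • 1))) := by rw [smul_eq_mul, mul_one]
      _ = (e t) • e (τ (e.symm 1)) := by simp only [map_smul]
      _ = e t • u := rfl
  have hsq : ∀ x : L, e (x ⊗ₜ[R] x) * u = e (x ⊗ₜ[R] x) := by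
    intro x
    have hh := hmul (x ⊗ₜ[R] x)
    rw [hτ, TensorProduct.comm_tmul, smul_eq_mul] at hh
    exact hh.symm
  have hu1 : u = 1 := by
    have h1 : (1 : R) ∈ Ideal.span (Set.range fun x : L => e (x ⊗ₜ[R] x)) := by
      rw [square_span_eq_top_of_tensor_equiv e]; trivial
    have key : ∀ r ∈ Ideal.span (Set.range fun x : L => e (x ⊗ₜ[R] x)), r * u = r := by
      intro r hr
      refine Submodule.span_induction ?_ ?_ ?_ ?_ hr
      · rintro _ ⟨x, rfl⟩; exact hsq x
      · simp
      · intro a b _ _ ha hb; rw [add_mul, ha, hb]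
      · intro c a _ ha; rw [smul_eq_mul, mul_assoc, ha]
    have := key 1 h1
    rwa [one_mul] at this
  have hcomm : ∀ t : L ⊗[R] L, τ t = t := by
    intro t
    apply e.injective
    rw [hmul, hu1, smul_eq_mul, mul_one]
  refine ⟨LinearEquiv.ext fun t => hcomm t, ?_⟩
  intro B x y
  have hxy : y ⊗ₜ[R] x = x ⊗ₜ[R] y := by
    have := hcomm (x ⊗ₜ[R] y)
    rwa [hτ, TensorProduct.comm_tmul] at this
  calc B x y = TensorProduct.lift B (x ⊗ₜ[R] y) := rfl
    _ = TensorProduct.lift B (y ⊗ₜ[R] x) := by rw [hxy]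
    _ = B y x := rfl
end

section
/- Let R be a commutative ring and L a finitely generated projective R-module such that there exists an R-module isomorphism f : L ⊗[R] L ≅ R. Then there exists an R-module isomorphism φ : L → Hom_R(L, R) which is symmetric, i.e., φ(x)(y) = φ(y)(x) for all x, y ∈ L; in other words, L carries a nondegenerate symmetric bilinear form. -/
open TensorProduct

set_option maxHeartbeats 1000000 in
/-- Key lemma: if `L` is a finite projective `R`-module with `L ⊗[R] L ≅ R`, then the
tensor-swap on `L ⊗[R] L` is the identity. -/
theorem aux_tmul_comm
    (R : Type*) [CommRing R] (L : Type*) [AddCommGroup L] [Module R L]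
    [Module.Finite R L] [Module.Projective R L]
    (f : (L ⊗[R] L) ≃ₗ[R] R) (x y : L) :
    x ⊗ₜ[R] y = y ⊗ₜ[R] x := by
  classical
  set u : R := f ((TensorProduct.comm R L L) (f.symm 1)) with hu_def
  have key0 : ∀ r : R, f ((TensorProduct.comm R L L) (f.symm r)) = r * u := by
    intro r
    have h1 : f.symm r = r • f.symm 1 := by rw [← map_smul, smul_eq_mul, mul_one]
    rw [h1, map_smul, map_smul, smul_eq_mul]
  have key : ∀ t : L ⊗[R] L, f ((TensorProduct.comm R L L) t) = f t * u := by
    intro t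
    have := key0 (f t)
    rwa [f.symm_apply_apply] at this
  have huu : ∀ a b : L, b ⊗ₜ[R] a = u • (a ⊗ₜ[R] b) := by
    intro a b
    apply f.injective
    rw [map_smul, smul_eq_mul, mul_comm]
    rw [← TensorProduct.comm_tmul R L L a b, key]
  -- show u = 1 by localizing at every maximal ideal
  have hu1 : u = 1 := by
    rw [← sub_eq_zero]
    apply eq_zero_of_localization
    intro J hJ
    set S := Localization.AtPrime J with hS
    haveI : Module.FinitePresentation S (S ⊗[R] L) :=
      Module.finitePresentation_of_projective S (S ⊗[R] L)
    haveI : Module.Free S (S ⊗[R] L) := Module.free_of_flat_of_isLocalRing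
    -- an equivalence (S ⊗ L) ⊗[S] (S ⊗ L) ≃ S
    let E : S ⊗[R] (L ⊗[R] L) ≃ₗ[S] (S ⊗[R] L) ⊗[S] (S ⊗[R] L) :=
      TensorProduct.AlgebraTensorModule.distribBaseChange R S L L
    let G : S ⊗[R] R ≃ₗ[S] S := (Algebra.TensorProduct.rid R S S).toLinearEquiv
    obtain ⟨e2⟩ : Nonempty ((S ⊗[R] L) ⊗[S] (S ⊗[R] L) ≃ₗ[S] S) :=
      ⟨E.symm ≪≫ₗ LinearEquiv.baseChange R S _ _ f ≪≫ₗ G⟩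
    -- rank of S ⊗ L is 1
    have hfr : Module.finrank S (S ⊗[R] L) = 1 := by
      have h2 : Module.finrank S (S ⊗[R] L) * Module.finrank S (S ⊗[R] L) = 1 := by
        have h3 : Module.finrank S ((S ⊗[R] L) ⊗[S] (S ⊗[R] L)) = 1 := by
          rw [e2.finrank_eq, Module.finrank_self]
        rwa [Module.finrank_tensorProduct (R := S) (S := S) (M := S ⊗[R] L)
          (M' := S ⊗[R] L)] at h3
      exact Nat.eq_one_of_mul_eq_one_right h2
    let b := Module.finBasisOfFinrankEq S (S ⊗[R] L) hfr
    have hrepr : ∀ m : S ⊗[R] L, m = b.repr m 0 • b 0 := by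
      intro m
      have := b.sum_repr m
      rw [Fin.sum_univ_one] at this
      exact this.symm
    have hsymm : ∀ m n : S ⊗[R] L, m ⊗ₜ[S] n = n ⊗ₜ[S] m := by
      intro m n
      rw [hrepr m, hrepr n, ← TensorProduct.smul_tmul', ← TensorProduct.smul_tmul',
        TensorProduct.tmul_smul, TensorProduct.tmul_smul, smul_smul, smul_smul, mul_comm]
    -- transport the relation `b ⊗ a = u • (a ⊗ b)` to `(S ⊗ L) ⊗[S] (S ⊗ L)`
    have hE : ∀ a c : L, E (1 ⊗ₜ[R] (a ⊗ₜ[R] c)) =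
        ((1 : S) ⊗ₜ[R] a) ⊗ₜ[S] ((1 : S) ⊗ₜ[R] c) := by
      intro a c
      have h4 : E.symm (((1 : S) ⊗ₜ[R] a) ⊗ₜ[S] ((1 : S) ⊗ₜ[R] c))
          = (1 : S) ⊗ₜ[R] (a ⊗ₜ[R] c) := by
        simp only [E, TensorProduct.AlgebraTensorModule.distribBaseChange, LinearEquiv.symm_symm,
          LinearEquiv.trans_apply, TensorProduct.AlgebraTensorModule.cancelBaseChange_tmul,
          one_smul, TensorProduct.AlgebraTensorModule.assoc_tmul]
      rw [← h4, E.apply_symm_apply]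
    let j : (L ⊗[R] L) →ₗ[R] S ⊗[R] (L ⊗[R] L) := TensorProduct.mk R S (L ⊗[R] L) 1
    have step : ∀ a c : L,
        ((1 : S) ⊗ₜ[R] c) ⊗ₜ[S] ((1 : S) ⊗ₜ[R] a) =
          algebraMap R S u • (((1 : S) ⊗ₜ[R] a) ⊗ₜ[S] ((1 : S) ⊗ₜ[R] c)) := by
      intro a c
      have h5 := congrArg (fun t => E (j t)) (huu a c)
      simp only [j, TensorProduct.mk_apply, map_smul] at h5
      rw [← algebraMap_smul S u ((1 : S) ⊗ₜ[R] (a ⊗ₜ[R] c)), map_smul, hE, hE] at h5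
      exact h5
    -- every element of the tensor square is fixed by multiplication by `u`
    have hgen : ∀ z : (S ⊗[R] L) ⊗[S] (S ⊗[R] L), algebraMap R S u • z = z := by
      have main : ∀ m n : S ⊗[R] L,
          algebraMap R S u • (m ⊗ₜ[S] n) = m ⊗ₜ[S] n := by
        intro m n
        induction m using TensorProduct.induction_on with
        | zero => simp
        | tmul s a =>
          induction n using TensorProduct.induction_on with
          | zero => simp
          | tmul s' c =>
            have hm : (s ⊗ₜ[R] a : S ⊗[R] L) = s • ((1 : S) ⊗ₜ[R] a) := by
              rw [TensorProduct.smul_tmul', smul_eq_mul, mul_one]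
            have hn : (s' ⊗ₜ[R] c : S ⊗[R] L) = s' • ((1 : S) ⊗ₜ[R] c) := by
              rw [TensorProduct.smul_tmul', smul_eq_mul, mul_one]
            have hz : algebraMap R S u • (((1 : S) ⊗ₜ[R] a) ⊗ₜ[S] ((1 : S) ⊗ₜ[R] c)) =
                ((1 : S) ⊗ₜ[R] a) ⊗ₜ[S] ((1 : S) ⊗ₜ[R] c) := by
              rw [← step a c]
              exact hsymm _ _
            rw [hm, hn, ← TensorProduct.smul_tmul', TensorProduct.tmul_smul,
              smul_comm (algebraMap R S u) s, smul_comm (algebraMap R S u) s', hz]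
          | add n₁ n₂ h₁ h₂ =>
            rw [TensorProduct.tmul_add, smul_add, h₁, h₂]
        | add m₁ m₂ h₁ h₂ =>
          rw [TensorProduct.add_tmul, smul_add, h₁, h₂]
      intro z
      induction z using TensorProduct.induction_on with
      | zero => simp
      | tmul m n => exact main m n
      | add z₁ z₂ h₁ h₂ => rw [smul_add, h₁, h₂]
    have h6 : algebraMap R S u = 1 := by
      have h7 := congrArg e2 (hgen (e2.symm 1))
      rw [map_smul, e2.apply_symm_apply, smul_eq_mul, mul_one] at h7
      exact h7
    rw [map_sub, map_one, h6, sub_self]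
  have := huu y x
  rwa [hu1, one_smul] at this

/-- Let `R` be a commutative ring and `L` a finitely generated projective `R`-module with an
`R`-module isomorphism `f : L ⊗[R] L ≅ R`.  Then there exists a symmetric `R`-module
isomorphism `φ : L ≃ L^∨`, i.e. `L` carries a nondegenerate symmetric bilinear form. -/
theorem exists_symmetric_nondegenerate_form
    (R : Type*) [CommRing R] (L : Type*) [AddCommGroup L] [Module R L]
    [Module.Finite R L] [Module.Projective R L]
    (f : (L ⊗[R] L) ≃ₗ[R] R) :
    ∃ φ : L ≃ₗ[R] Module.Dual R L, ∀ x y : L, φ x y = φ y x := by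
  classical
  have hswap := aux_tmul_comm R L f
  -- cyclic identity
  have cyc : ∀ p q r : L, f (p ⊗ₜ[R] q) • r = f (r ⊗ₜ[R] p) • q := by
    intro p q r
    have a1 : r ⊗ₜ[R] (p ⊗ₜ[R] q) = r ⊗ₜ[R] (q ⊗ₜ[R] p) := by rw [hswap p q]
    have a2 : (r ⊗ₜ[R] q) ⊗ₜ[R] p = (q ⊗ₜ[R] r) ⊗ₜ[R] p := by rw [hswap r q]
    have a3 := congrArg (TensorProduct.assoc R L L L) a2
    simp only [TensorProduct.assoc_tmul] at a3
    have h1 : r ⊗ₜ[R] (p ⊗ₜ[R] q) = q ⊗ₜ[R] (r ⊗ₜ[R] p) := by rw [a1, a3]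
    let H : L ⊗[R] (L ⊗[R] L) →ₗ[R] L :=
      TensorProduct.lift ((LinearMap.lsmul R L ∘ₗ f.toLinearMap).flip)
    have h2 := congrArg H h1
    simpa [H, TensorProduct.lift.tmul] using h2
  set φ₀ : L →ₗ[R] Module.Dual R L := TensorProduct.curry f.toLinearMap with hφ₀
  have hφ₀app : ∀ x y : L, φ₀ x y = f (x ⊗ₜ[R] y) := fun x y => rfl
  -- injectivity
  have inj : Function.Injective φ₀ := by
    rw [← LinearMap.ker_eq_bot (f := φ₀), LinearMap.ker_eq_bot']
    intro x hx
    have hN : (LinearMap.smulRight f.toLinearMap x) = 0 := by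
      apply TensorProduct.ext'
      intro a c
      simp only [LinearMap.smulRight_apply, LinearMap.zero_apply, LinearEquiv.coe_coe]
      rw [cyc a c x]
      have hfz : f (x ⊗ₜ[R] a) = 0 := by
        have := congrArg (fun g : Module.Dual R L => g a) hx
        simpa [hφ₀app] using this
      rw [hfz, zero_smul]
    have h3 := congrArg (fun N : L ⊗[R] L →ₗ[R] L => N (f.symm 1)) hN
    simpa using h3
  -- surjectivity
  have surj : Function.Surjective φ₀ := by
    intro g
    refine ⟨TensorProduct.lift (LinearMap.lsmul R L ∘ₗ g) (f.symm 1), ?_⟩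
    apply LinearMap.ext
    intro y
    let V : L ⊗[R] L →ₗ[R] R :=
      f.toLinearMap ∘ₗ ((TensorProduct.mk R L L).flip y) ∘ₗ
        TensorProduct.lift (LinearMap.lsmul R L ∘ₗ g)
    let V' : L ⊗[R] L →ₗ[R] R := g y • f.toLinearMap
    have hV : V = V' := by
      apply TensorProduct.ext'
      intro a c
      simp only [V, V', LinearMap.comp_apply, TensorProduct.lift.tmul, LinearMap.lsmul_apply,
        LinearMap.flip_apply, TensorProduct.mk_apply, LinearMap.smul_apply, LinearEquiv.coe_coe,
        map_smul, smul_eq_mul]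
      have h4 := congrArg g (cyc c y a)
      simp only [map_smul, smul_eq_mul] at h4
      rw [mul_comm (g a), mul_comm (g y)]
      exact h4
    have h5 := congrArg (fun W : L ⊗[R] L →ₗ[R] R => W (f.symm 1)) hV
    simp only [V, V', LinearMap.comp_apply, LinearMap.flip_apply, TensorProduct.mk_apply,
      LinearMap.smul_apply, LinearEquiv.coe_coe, f.apply_symm_apply, smul_eq_mul,
      mul_one] at h5
    rw [hφ₀app]
    exact h5
  refine ⟨LinearEquiv.ofBijective φ₀ ⟨inj, surj⟩, ?_⟩
  intro x y
  show f (x ⊗ₜ[R] y) = f (y ⊗ₜ[R] x)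
  rw [hswap x y]
end
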